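/- For every graph G = G(n,m) with n vertices and m edges, μ₁(G) − 2m/n ≤ √(s(G)), where s(G) = Σ_{u∈V(G)} |d(u) − 2m/n| and μ₁(G) is the largest adjacency eigenvalue. -/

import Mathlib

open Matrix SimpleGraph

lemma rayleigh_le {n : ℕ} {A : Matrix (Fin n) (Fin n) ℝ} (hA : A.IsHermitian) {μ : ℝ}
    (hμ : ∀ i, hA.eigenvalues i ≤ μ) (x : Fin n → ℝ) :
    x ⬝ᵥ (A *ᵥ x) ≤ μ * (x ⬝ᵥ x) := by
  set V : Matrix (Fin n) (Fin n) ℝ := (hA.eigenvectorUnitary : Matrix (Fin n) (Fin n) ℝ) with hV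
  have hVmem := hA.eigenvectorUnitary.2
  have hVV : V * star V = 1 := (Unitary.mem_iff.mp hVmem).2
  set y : Fin n → ℝ := star V *ᵥ x with hy
  have hxV : x ᵥ* V = y := by
    rw [hy, Matrix.star_eq_conjTranspose, Matrix.conjTranspose_eq_transpose_of_trivial,
      Matrix.mulVec_transpose]
  have hAx : x ⬝ᵥ (A *ᵥ x) = ∑ i, hA.eigenvalues i * (y i * y i) := by
    conv_lhs => rw [hA.spectral_theorem, Unitary.conjStarAlgAut_apply]
    rw [← Matrix.mulVec_mulVec, ← Matrix.mulVec_mulVec, Matrix.dotProduct_mulVec, hxV, ← hy]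
    simp [dotProduct, Matrix.mulVec_diagonal, RCLike.ofReal_real_eq_id, mul_comm,
      mul_left_comm]
  have hxx : x ⬝ᵥ x = ∑ i, y i * y i := by
    have : y ⬝ᵥ y = (x ᵥ* (V * star V)) ⬝ᵥ x := by
      rw [hy, Matrix.dotProduct_mulVec, ← Matrix.vecMul_vecMul, hxV, hy]
    rw [hVV, Matrix.vecMul_one] at this
    rw [← this]; rfl
  rw [hAx, hxx, Finset.mul_sum]
  apply Finset.sum_le_sum
  intro i _
  have h1 : 0 ≤ y i * y i := mul_self_nonneg _
  nlinarith [hμ i]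

/-- The eigenvalues of the adjacency matrix of `G`, in descending order:
`graphEig G i` is the `(i+1)`-th largest eigenvalue. -/
noncomputable def graphEig {n : ℕ} (G : SimpleGraph (Fin n)) (i : Fin n) : ℝ :=
  letI := Classical.decRel G.Adj
  letI hH : (G.adjMatrix ℝ).IsHermitian := by rw [Matrix.IsHermitian, conjTranspose_eq_transpose_of_trivial]; exact G.isSymm_adjMatrix
  hH.eigenvalues (Tuple.sort hH.eigenvalues i.rev)

theorem stmt5 (n : ℕ) (hn : 0 < n) (G : SimpleGraph (Fin n)) :
    graphEig G ⟨0, hn⟩ - 2 * (G.edgeSet.ncard : ℝ) / n ≤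
      Real.sqrt (∑ u : Fin n,
        |((G.neighborSet u).ncard : ℝ) - 2 * (G.edgeSet.ncard : ℝ) / n|) := by
  letI := Classical.decRel G.Adj
  have hH : (G.adjMatrix ℝ).IsHermitian := by
    rw [Matrix.IsHermitian, conjTranspose_eq_transpose_of_trivial]; exact G.isSymm_adjMatrix
  set A := G.adjMatrix ℝ with hAdef
  set μ : ℝ := graphEig G ⟨0, hn⟩ with hμdef
  set j : Fin n := Tuple.sort hH.eigenvalues (Fin.rev ⟨0, hn⟩) with hj
  have hμ_eq : μ = hH.eigenvalues j := rfl
  -- μ is the largest eigenvalue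
  have hmax : ∀ i, hH.eigenvalues i ≤ μ := by
    intro i
    have h1 : (Tuple.sort hH.eigenvalues).symm i ≤ Fin.rev ⟨0, hn⟩ := by
      have h2 : (⟨0, hn⟩ : Fin n) ≤ Fin.rev ((Tuple.sort hH.eigenvalues).symm i) := by
        simp [Fin.le_def]
      have := Fin.rev_le_rev.mpr h2
      simpa [Fin.rev_rev] using this
    have h3 := Tuple.monotone_sort hH.eigenvalues h1
    simpa [hμ_eq, Function.comp] using h3
  -- unit eigenvector
  set x : Fin n → ℝ := ⇑(hH.eigenvectorBasis j) with hx
  have hxeig : A *ᵥ x = μ • x := by rw [hμ_eq]; exact hH.mulVec_eigenvectorBasis j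
  have hxunit : x ⬝ᵥ x = 1 := by
    have h := hH.eigenvectorBasis.orthonormal.1 j
    have h2 : (inner ℝ (hH.eigenvectorBasis j) (hH.eigenvectorBasis j) : ℝ) = 1 := by
      rw [real_inner_self_eq_norm_sq, h]; norm_num
    simpa only [PiLp.inner_apply, RCLike.inner_apply, conj_trivial, dotProduct] using h2
  -- the entrywise absolute value of x is also a unit eigenvector for μ
  set y : Fin n → ℝ := fun u => |x u| with hy
  have hynn : ∀ u, 0 ≤ y u := fun u => abs_nonneg _
  have hyy : y ⬝ᵥ y = 1 := by
    simpa [dotProduct, hy, abs_mul_abs_self] using hxunit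
  have hxAx : x ⬝ᵥ (A *ᵥ x) = μ := by
    rw [hxeig, dotProduct_smul, hxunit, smul_eq_mul, mul_one]
  have hAnn : ∀ u v, (0:ℝ) ≤ A u v := by
    intro u v
    rw [hAdef, SimpleGraph.adjMatrix_apply]
    split <;> norm_num
  have hyAy_ge : μ ≤ y ⬝ᵥ (A *ᵥ y) := by
    rw [← hxAx]
    simp only [dotProduct, Matrix.mulVec]
    apply Finset.sum_le_sum
    intro u _
    simp only [dotProduct, Finset.mul_sum]
    apply Finset.sum_le_sum
    intro v _
    calc x u * (A u v * x v) ≤ |x u * (A u v * x v)| := le_abs_self _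
      _ = y u * (A u v * y v) := by
          rw [abs_mul, abs_mul, abs_of_nonneg (hAnn u v)]
  have hyAy_le : y ⬝ᵥ (A *ᵥ y) ≤ μ := by
    have := rayleigh_le hH hmax y
    rwa [hyy, mul_one] at this
  have hyAy : y ⬝ᵥ (A *ᵥ y) = μ := le_antisymm hyAy_le hyAy_ge
  have hBpsd : (μ • (1 : Matrix (Fin n) (Fin n) ℝ) - A).PosSemidef := by
    rw [Matrix.posSemidef_iff_dotProduct_mulVec]
    constructor
    · exact Matrix.IsHermitian.sub (by simp [Matrix.IsHermitian]) hH
    · intro v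
      have h := rayleigh_le hH hmax v
      simp only [star_trivial, Matrix.sub_mulVec, Matrix.smul_mulVec, Matrix.one_mulVec,
        dotProduct_sub, dotProduct_smul, smul_eq_mul]
      linarith
  have hyeig : A *ᵥ y = μ • y := by
    have h0 : star y ⬝ᵥ ((μ • (1 : Matrix (Fin n) (Fin n) ℝ) - A) *ᵥ y) = 0 := by
      simp only [star_trivial, Matrix.sub_mulVec, Matrix.smul_mulVec, Matrix.one_mulVec,
        dotProduct_sub, dotProduct_smul, smul_eq_mul, hyy, hyAy, mul_one, sub_self]
    have h1 := (hBpsd.dotProduct_mulVec_zero_iff y).mp h0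
    rw [Matrix.sub_mulVec, Matrix.smul_mulVec, Matrix.one_mulVec, sub_eq_zero] at h1
    exact h1.symm
  -- degree bookkeeping
  have hdegR : ∀ u, ((G.neighborSet u).ncard : ℝ) = (G.degree u : ℝ) := by
    intro u
    rw [← Nat.card_coe_set_eq, Nat.card_eq_fintype_card,
      SimpleGraph.card_neighborSet_eq_degree]
  have hedges : 2 * (G.edgeSet.ncard : ℝ) = ∑ u : Fin n, (G.degree u : ℝ) := by
    have h := G.sum_degrees_eq_twice_card_edges
    have h2 : G.edgeSet.ncard = G.edgeFinset.card := by
      rw [← Nat.card_coe_set_eq, Nat.card_eq_fintype_card, SimpleGraph.edgeFinset_card]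
    rw [h2]
    exact_mod_cast h.symm
  set dbar : ℝ := 2 * (G.edgeSet.ncard : ℝ) / n with hdbardef
  have hdbarnn : 0 ≤ dbar := by positivity
  have hcol : ∀ w : Fin n → ℝ, (fun _ => (1:ℝ)) ⬝ᵥ (A *ᵥ w) = ∑ v, (G.degree v : ℝ) * w v := by
    intro w
    rw [Matrix.dotProduct_mulVec]
    have hrow : ∀ v, ((fun _ => (1:ℝ)) ᵥ* A) v = (G.degree v : ℝ) := by
      intro v
      rw [hAdef, SimpleGraph.adjMatrix_vecMul_apply]
      simp only [Finset.sum_const, nsmul_eq_mul, mul_one, SimpleGraph.degree]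
    simp only [dotProduct, hrow]
  have hμd : dbar ≤ μ := by
    have h := rayleigh_le hH hmax (fun _ => (1:ℝ))
    rw [hcol (fun _ => (1:ℝ))] at h
    have h2 : ∑ v, (G.degree v : ℝ) * 1 = 2 * (G.edgeSet.ncard : ℝ) := by
      rw [hedges]; simp
    have h3 : ((fun _ => (1:ℝ)) : Fin n → ℝ) ⬝ᵥ ((fun _ => (1:ℝ)) : Fin n → ℝ) = (n:ℝ) := by
      simp [dotProduct]
    rw [h2, h3] at h
    rw [hdbardef, div_le_iff₀ (by exact_mod_cast hn)]
    linarith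
  set S : ℝ := ∑ u, y u with hSdef
  have hμS : μ * S = ∑ v, (G.degree v : ℝ) * y v := by
    have h := hcol y
    rw [hyeig] at h
    have h2 : (fun _ => (1:ℝ)) ⬝ᵥ (μ • y) = μ * S := by
      simp [dotProduct, Finset.mul_sum, hSdef]
    rw [← h2, h]
  obtain ⟨w, -, hwmax'⟩ := Finset.exists_max_image (Finset.univ : Finset (Fin n)) y
    ⟨⟨0, hn⟩, Finset.mem_univ _⟩
  have hwmax : ∀ u, y u ≤ y w := fun u => hwmax' u (Finset.mem_univ u)
  have hywpos : 0 < y w := by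
    rcases lt_or_ge 0 (y w) with h | h
    · exact h
    · exfalso
      have hy0 : ∀ u, y u = 0 := fun u => le_antisymm (le_trans (hwmax u) h) (hynn u)
      rw [dotProduct] at hyy
      simp [hy0] at hyy
  have hμyw : μ * y w ≤ S := by
    have h : (A *ᵥ y) w = μ * y w := by rw [hyeig]; simp
    rw [hAdef, SimpleGraph.adjMatrix_mulVec_apply] at h
    rw [← h, hSdef]
    exact Finset.sum_le_sum_of_subset_of_nonneg (Finset.subset_univ _)
      (fun i _ _ => hynn i)
  set s : ℝ := ∑ u, |(G.degree u : ℝ) - dbar| with hsdef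
  have hkey : (μ - dbar) * S ≤ s * y w := by
    have h1 : (μ - dbar) * S = ∑ u, ((G.degree u : ℝ) - dbar) * y u := by
      simp only [sub_mul, Finset.sum_sub_distrib]
      rw [hμS, hSdef, Finset.mul_sum]
    rw [h1, hsdef, Finset.sum_mul]
    apply Finset.sum_le_sum
    intro u _
    have h2 : ((G.degree u : ℝ) - dbar) * y u ≤ |(G.degree u : ℝ) - dbar| * y u :=
      mul_le_mul_of_nonneg_right (le_abs_self _) (hynn u)
    have h3 : |(G.degree u : ℝ) - dbar| * y u ≤ |(G.degree u : ℝ) - dbar| * y w :=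
      mul_le_mul_of_nonneg_left (hwmax u) (abs_nonneg _)
    linarith
  have hfinal : (μ - dbar) ^ 2 ≤ s := by
    have hμd' : 0 ≤ μ - dbar := by linarith
    have h4 : (μ - dbar) * (μ * y w) ≤ (μ - dbar) * S := mul_le_mul_of_nonneg_left hμyw hμd'
    have h6 : (μ - dbar) * μ ≤ s := by
      have h5 : (μ - dbar) * μ * y w ≤ s * y w := by nlinarith
      exact le_of_mul_le_mul_right h5 hywpos
    nlinarith
  have hgoal : ∑ u : Fin n, |((G.neighborSet u).ncard : ℝ) - dbar| = s := by
    rw [hsdef]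
    exact Finset.sum_congr rfl fun u _ => by rw [hdegR u]
  rw [hgoal]
  exact Real.le_sqrt_of_sq_le hfinal
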